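/- Let Σ be a type, w : ℕ → Option Σ a partial word, and x ≤ y positions with w x ≠ none and w y ≠ none. Then the length of w[x,y] is a power of two (i.e., there exists n : ℕ with (w[x,y]).length = 2^n) if and only if (w[x,y]).length = 1, or there exist positions z₁, z₂ with x ≤ z₁, z₁ ⤳_w z₂, z₂ ≤ y, such that the length of w[x,z₁] is a power of two and (w[x,z₁]).length = (w[z₂,y]).length. (The recursive invariant underlying Lemma 4.2 of the paper, by which the language of all words whose length is a power of two is maintained in DynCQ.) -/

import Mathlib

/-- `y` carries the next symbol after `x` in the partial word `w`. -/
def Nxt {α : Type*} (w : ℕ → Option α) (x y : ℕ) : Prop :=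
  w x ≠ none ∧ w y ≠ none ∧ x < y ∧ ∀ z, x < z → z < y → w z = none

/-- The subword of `w` between positions `i` and `j` (inclusive). -/
def subword {α : Type*} (w : ℕ → Option α) (i j : ℕ) : List α :=
  (List.range' i (j + 1 - i)).filterMap w

namespace PowTwoAux

variable {α : Type*} (w : ℕ → Option α)

/-- number of symbol positions in `[s, s+n)` -/
def cnt (s n : ℕ) : ℕ := (List.range' s n).countP (fun i => (w i).isSome)

lemma length_filterMap_eq (l : List ℕ) :
    (l.filterMap w).length = l.countP (fun i => (w i).isSome) := by
  induction l with
  | nil => simp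
  | cons a l ih =>
    cases h : w a <;> simp [List.filterMap_cons, h, ih, List.countP_cons]

lemma subword_length (i j : ℕ) : (subword w i j).length = cnt w i (j + 1 - i) :=
  length_filterMap_eq w _

lemma cnt_add (s m n : ℕ) : cnt w s (m + n) = cnt w s m + cnt w (s + m) n := by
  rw [cnt, ← List.range'_append_1, List.countP_append]; rfl

lemma cnt_succ (s n : ℕ) :
    cnt w s (n + 1) = cnt w s n + (if (w (s + n)).isSome then 1 else 0) := by
  rw [cnt_add]
  simp [cnt, List.range'_one, List.countP_cons]

lemma cnt_eq_zero (s n : ℕ) (h : ∀ k, k < n → w (s + k) = none) : cnt w s n = 0 := by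
  induction n with
  | zero => simp [cnt]
  | succ n ih =>
    rw [cnt_succ, ih (fun k hk => h k (Nat.lt_succ_of_lt hk)), h n (Nat.lt_succ_self n)]
    simp

lemma exists_prefix (x : ℕ) :
    ∀ n c, 1 ≤ c → c ≤ cnt w x n → ∃ k, k < n ∧ (w (x + k)).isSome ∧ cnt w x (k + 1) = c := by
  intro n
  induction n with
  | zero => intro c hc h; simp [cnt] at h; omega
  | succ n ih =>
    intro c hc h
    by_cases hle : c ≤ cnt w x n
    · obtain ⟨k, hk, hs, hc'⟩ := ih c hc hle
      exact ⟨k, Nat.lt_succ_of_lt hk, hs, hc'⟩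
    · rw [cnt_succ] at h
      by_cases hs : (w (x + n)).isSome
      · refine ⟨n, Nat.lt_succ_self n, hs, ?_⟩
        rw [cnt_succ]
        simp only [hs, if_true] at h ⊢
        omega
      · simp [hs] at h; omega

end PowTwoAux

theorem pow_two_length_recursive_invariant {α : Type*} (w : ℕ → Option α) (x y : ℕ)
    (hxy : x ≤ y) (hx : w x ≠ none) (hy : w y ≠ none) :
    (∃ n : ℕ, (subword w x y).length = 2 ^ n) ↔
      (subword w x y).length = 1 ∨
        ∃ z₁ z₂ : ℕ, x ≤ z₁ ∧ Nxt w z₁ z₂ ∧ z₂ ≤ y ∧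
          (∃ n : ℕ, (subword w x z₁).length = 2 ^ n) ∧
          (subword w x z₁).length = (subword w z₂ y).length := by
  open PowTwoAux in
  constructor
  · rintro ⟨n, hn⟩
    rcases n with _ | n
    · left; simpa using hn
    · right
      rw [subword_length] at hn
      -- total count is 2^(n+1); find prefix of count 2^n ending at a symbol
      have h1 : 1 ≤ (2 : ℕ) ^ n := Nat.one_le_two_pow
      have hle : (2 : ℕ) ^ n ≤ cnt w x (y + 1 - x) := by
        rw [hn, pow_succ]; omega
      obtain ⟨k, hk, hks, hkc⟩ := exists_prefix w x (y + 1 - x) (2 ^ n) h1 hle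
      set z₁ := x + k with hz₁
      have hz₁y : z₁ ≤ y := by omega
      have hsplit : cnt w x (y + 1 - x) = cnt w x (k + 1) + cnt w (z₁ + 1) (y - z₁) := by
        have : y + 1 - x = (k + 1) + (y - z₁) := by omega
        rw [this, cnt_add]
        have e : x + (k + 1) = z₁ + 1 := by omega
        rw [e]
      have hrest : cnt w (z₁ + 1) (y - z₁) = 2 ^ n := by
        rw [hn, pow_succ] at hsplit
        omega
      -- find the first symbol after z₁
      have hnonempty : ∃ j, (w (z₁ + 1 + j)).isSome ∧ j < y - z₁ := by
        by_contra hcon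
        push_neg at hcon
        have : cnt w (z₁ + 1) (y - z₁) = 0 := by
          apply cnt_eq_zero
          intro j hj
          have := hcon j
          cases hwj : w (z₁ + 1 + j)
          · rfl
          · exfalso; have := this (by simp [hwj]); omega
        omega
      classical
      have hne : ∃ j, (w (z₁ + 1 + j)).isSome := ⟨hnonempty.choose, hnonempty.choose_spec.1⟩
      set j₀ := Nat.find hne with hj₀
      have hj₀s : (w (z₁ + 1 + j₀)).isSome := Nat.find_spec hne
      have hj₀min : ∀ j, j < j₀ → ¬ (w (z₁ + 1 + j)).isSome := fun j hj => Nat.find_min hne hj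
      have hj₀lt : j₀ < y - z₁ :=
        lt_of_le_of_lt (Nat.find_min' hne hnonempty.choose_spec.1) hnonempty.choose_spec.2
      set z₂ := z₁ + 1 + j₀ with hz₂
      refine ⟨z₁, z₂, by omega, ⟨?_, ?_, by omega, ?_⟩, by omega, ⟨n, ?_⟩, ?_⟩
      · intro h; rw [h] at hks; simp at hks
      · intro h; rw [h] at hj₀s; simp at hj₀s
      · intro z hz1 hz2
        have : z = z₁ + 1 + (z - z₁ - 1) := by omega
        rw [this]
        have := hj₀min (z - z₁ - 1) (by omega)
        cases hwz : w (z₁ + 1 + (z - z₁ - 1))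
        · rfl
        · exfalso; exact this (by simp [hwz])
      · rw [subword_length]
        have : z₁ + 1 - x = k + 1 := by omega
        rw [this, hkc]
      · rw [subword_length, subword_length]
        have hz1 : z₁ + 1 - x = k + 1 := by omega
        rw [hz1, hkc]
        -- count from z₂ to y equals count from z₁+1 over (y - z₁), since (z₁, z₂) is all none
        have hmid : cnt w (z₁ + 1) j₀ = 0 := by
          apply cnt_eq_zero
          intro j hj
          have := hj₀min j hj
          cases hwj : w (z₁ + 1 + j)
          · rfl
          · exfalso; exact this (by simp [hwj])
        have : cnt w (z₁ + 1) (y - z₁) = cnt w (z₁ + 1) j₀ + cnt w (z₂) (y + 1 - z₂) := by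
          have h1 : y - z₁ = j₀ + (y + 1 - z₂) := by omega
          rw [h1, cnt_add]
        rw [hmid] at this
        omega
  · rintro (h1 | ⟨z₁, z₂, hxz₁, ⟨hwz₁, hwz₂, hz₁₂, hmid⟩, hz₂y, ⟨n, hn⟩, heq⟩)
    · exact ⟨0, by simpa using h1⟩
    · refine ⟨n + 1, ?_⟩
      rw [subword_length] at hn heq ⊢
      rw [subword_length] at heq
      have hmid0 : cnt w (z₁ + 1) (z₂ - z₁ - 1) = 0 := by
        apply PowTwoAux.cnt_eq_zero
        intro k hk
        exact hmid _ (by omega) (by omega)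
      have hsplit : cnt w x (y + 1 - x) =
          cnt w x (z₁ + 1 - x) + (cnt w (z₁ + 1) (z₂ - z₁ - 1) + cnt w z₂ (y + 1 - z₂)) := by
        have e1 : y + 1 - x = (z₁ + 1 - x) + ((z₂ - z₁ - 1) + (y + 1 - z₂)) := by omega
        rw [e1, cnt_add, cnt_add]
        have a1 : x + (z₁ + 1 - x) = z₁ + 1 := by omega
        rw [a1]
        have a2 : z₁ + 1 + (z₂ - z₁ - 1) = z₂ := by omega
        rw [a2]
      rw [hsplit, hmid0, hn, ← heq, hn, pow_succ]
      omega
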